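/- arXiv:1305.1598 — 3 statements merged into one kernel-verified Lean document; each statement's English description precedes it below -/
import Mathlib

section
/- Let p be a prime, r a positive integer, and w_1, …, w_r ≥ 0 with Σ_s w_s = 1. Let r̃ = max{s : w_s ≠ 0}. For r − r̃ ≤ θ ≤ r define ω_θ = (Σ_{s=1}^r (θ+s−r)^+ w_s) / (Σ_{s=1}^r s w_s), where x^+ = max(x,0). Then 1 − ω_θ ≥ (r−θ)/r̃. -/
theorem stmt_11 (p r : ℕ) (hp : p.Prime) (hr : 0 < r)
    (w : ℕ → ℝ) (hw0 : ∀ s, 0 ≤ w s) (hsum : ∑ s ∈ Finset.Icc 1 r, w s = 1)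
    (rt : ℕ) (hrt1 : 1 ≤ rt) (hrtr : rt ≤ r) (hwrt : w rt ≠ 0)
    (hmax : ∀ s ∈ Finset.Icc 1 r, rt < s → w s = 0)
    (θ : ℕ) (hθl : r - rt ≤ θ) (hθr : θ ≤ r) :
    1 - (∑ s ∈ Finset.Icc 1 r, max ((θ : ℝ) + (s : ℝ) - (r : ℝ)) 0 * w s) /
          (∑ s ∈ Finset.Icc 1 r, (s : ℝ) * w s) ≥ ((r : ℝ) - (θ : ℝ)) / (rt : ℝ) := by
  set N := ∑ s ∈ Finset.Icc 1 r, max ((θ : ℝ) + (s : ℝ) - (r : ℝ)) 0 * w s with hN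
  set D := ∑ s ∈ Finset.Icc 1 r, (s : ℝ) * w s with hD
  have hrtmem : rt ∈ Finset.Icc 1 r := Finset.mem_Icc.mpr ⟨hrt1, hrtr⟩
  have hwrtpos : 0 < w rt := lt_of_le_of_ne (hw0 rt) (Ne.symm hwrt)
  have hrtpos : (0:ℝ) < rt := by exact_mod_cast hrt1
  have hDpos : 0 < D := by
    have h1 : (rt:ℝ) * w rt ≤ D :=
      Finset.single_le_sum (fun s _ => mul_nonneg (Nat.cast_nonneg s) (hw0 s)) hrtmem
    nlinarith
  have hθl' : (r:ℝ) - rt ≤ θ := by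
    have h := Nat.sub_le_iff_le_add.mp hθl
    have : (r:ℝ) ≤ θ + rt := by exact_mod_cast h
    linarith
  have hθr' : (θ:ℝ) ≤ r := by exact_mod_cast hθr
  have key : ((r:ℝ) - θ) * D ≤ (D - N) * rt := by
    have hDN : D - N = ∑ s ∈ Finset.Icc 1 r,
        ((s:ℝ) - max ((θ : ℝ) + (s : ℝ) - (r : ℝ)) 0) * w s := by
      rw [hD, hN, ← Finset.sum_sub_distrib]
      exact Finset.sum_congr rfl (fun s _ => by ring)
    rw [hDN, hD, Finset.mul_sum, Finset.sum_mul]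
    apply Finset.sum_le_sum
    intro s hs
    have hs1 : 1 ≤ s := (Finset.mem_Icc.mp hs).1
    have hsr : s ≤ r := (Finset.mem_Icc.mp hs).2
    by_cases hsrt : rt < s
    · rw [hmax s hs hsrt]; simp
    · push_neg at hsrt
      have hsrt' : (s:ℝ) ≤ rt := by exact_mod_cast hsrt
      have hws := hw0 s
      have hs0 : (0:ℝ) ≤ s := Nat.cast_nonneg s
      rcases le_or_gt ((θ:ℝ) + s - r) 0 with hc | hc
      · rw [max_eq_right hc]
        nlinarith [mul_nonneg (mul_nonneg (by linarith : (0:ℝ) ≤ ↑rt - (↑r - ↑θ)) hs0) hws]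
      · rw [max_eq_left hc.le]
        nlinarith [mul_nonneg (mul_nonneg (by linarith : (0:ℝ) ≤ (r:ℝ) - θ) hws) (by linarith : (0:ℝ) ≤ (rt:ℝ) - s)]
  rw [ge_iff_le, show (1:ℝ) - N / D = (D - N) / D by field_simp,
    div_le_div_iff₀ hrtpos hDpos]
  linarith
end

section
/- Let p be a prime, r and k positive integers, and w_1,…,w_r nonnegative reals summing to 1 with k·w_s integers. Let J = ⊕_{s=1}^{r} ℤ_{p^s}^{k w_s}. For a ∈ J and 0 ≤ θ < r, let T_θ(a) be the set of ã ∈ J such that min over all coordinates (s,l) of (r − s)^+ + θ̂_{s,l} equals θ, where θ̂_{s,l} is the largest exponent with ã_{s,l} − a_{s,l} ∈ p^{θ̂_{s,l}}ℤ_{p^s}. Then |T_θ(a)| = (∏_{s=1}^{r} min(p^{r−θ}, p^s)^{k w_s}) − (∏_{s=1}^{r} min(p^{r−θ−1}, p^s)^{k w_s}). -/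
/-- The largest exponent `t ≤ s` such that `x` is a multiple of `p^t` in `ℤ_{p^s}`. -/
noncomputable def expOf (p s : ℕ) (x : ZMod (p ^ s)) : ℕ :=
  sSup {t | t ≤ s ∧ ∃ c : ZMod (p ^ s), x = (p : ZMod (p ^ s)) ^ t * c}
lemma le_expOf_iff (p s t : ℕ) (x : ZMod (p ^ s)) :
    t ≤ expOf p s x ↔ t ≤ s ∧ ∃ c : ZMod (p ^ s), x = (p : ZMod (p ^ s)) ^ t * c := by
  rw [expOf]
  set E := {t | t ≤ s ∧ ∃ c : ZMod (p ^ s), x = (p : ZMod (p ^ s)) ^ t * c} with hE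
  have h0 : 0 ∈ E := ⟨Nat.zero_le _, x, by simp⟩
  have hbdd : BddAbove E := ⟨s, fun u hu => hu.1⟩
  constructor
  · intro ht
    have hmem : sSup E ∈ E := Nat.sSup_mem ⟨0, h0⟩ hbdd
    obtain ⟨hle, c, hc⟩ := hmem
    exact ⟨le_trans ht hle, (p : ZMod (p ^ s)) ^ (sSup E - t) * c, by
      rw [hc, ← mul_assoc, ← pow_add]
      congr 2
      omega⟩
  · intro hmem
    exact le_csSup hbdd hmem


lemma exists_mul_iff_dvd_val (p s t : ℕ) (hp : 0 < p) (hts : t ≤ s) (x : ZMod (p ^ s)) :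
    (∃ c : ZMod (p ^ s), x = (p : ZMod (p ^ s)) ^ t * c) ↔ p ^ t ∣ x.val := by
  haveI : NeZero (p ^ s) := ⟨(pow_pos hp s).ne'⟩
  constructor
  · rintro ⟨c, rfl⟩
    have : ((p : ZMod (p ^ s)) ^ t * c).val = (p ^ t * c.val) % p ^ s := by
      rw [← Nat.cast_pow, ZMod.val_mul, ZMod.val_natCast]
      conv_rhs => rw [← Nat.mod_mul_mod]
    rw [this]
    exact (Nat.dvd_mod_iff (pow_dvd_pow p hts)).mpr ⟨c.val, rfl⟩
  · rintro ⟨d, hd⟩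
    refine ⟨(d : ZMod (p ^ s)), ?_⟩
    calc x = ((x.val : ℕ) : ZMod (p ^ s)) := by simp [ZMod.natCast_val, ZMod.cast_id]
    _ = ((p ^ t * d : ℕ) : ZMod (p ^ s)) := by rw [hd]
    _ = (p : ZMod (p ^ s)) ^ t * d := by push_cast; ring

open Finset in
lemma card_dvd_val (p s t : ℕ) (hp : 0 < p) (hts : t ≤ s) :
    Nat.card {x : ZMod (p ^ s) // p ^ t ∣ x.val} = p ^ (s - t) := by
  haveI : NeZero (p ^ s) := ⟨(pow_pos hp s).ne'⟩
  classical
  rw [Nat.card_eq_fintype_card, Fintype.card_subtype]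
  have hpt : 0 < p ^ t := pow_pos hp t
  rw [← Finset.card_range (p ^ (s - t))]
  apply Finset.card_bij' (fun x _ => x.val / p ^ t)
      (fun i _ => ((p ^ t * i : ℕ) : ZMod (p ^ s)))
  · intro x hx
    simp only [Finset.mem_filter, Finset.mem_univ, true_and] at hx
    obtain ⟨d, hd⟩ := hx
    have hv : x.val < p ^ s := ZMod.val_lt x
    rw [Finset.mem_range]
    rw [hd, Nat.mul_div_cancel_left _ hpt]
    by_contra h
    push_neg at h
    have : p ^ s ≤ p ^ t * d := by
      calc p ^ s = p ^ t * p ^ (s - t) := by rw [← pow_add]; congr 1; omega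
      _ ≤ p ^ t * d := Nat.mul_le_mul_left _ h
    omega
  · intro i hi
    simp only [Finset.mem_range] at hi
    simp only [Finset.mem_filter, Finset.mem_univ, true_and]
    rw [ZMod.val_natCast]
    have hlt : p ^ t * i < p ^ s := by
      calc p ^ t * i < p ^ t * p ^ (s - t) := (Nat.mul_lt_mul_left hpt).mpr hi
      _ = p ^ s := by rw [← pow_add]; congr 1; omega
    rw [Nat.mod_eq_of_lt hlt]
    exact ⟨i, rfl⟩
  · intro x hx
    simp only [Finset.mem_filter, Finset.mem_univ, true_and] at hx
    rw [Nat.mul_div_cancel' hx]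
    simp [ZMod.natCast_val, ZMod.cast_id]
  · intro i hi
    simp only [Finset.mem_range] at hi
    rw [ZMod.val_natCast]
    have hlt : p ^ t * i < p ^ s := by
      calc p ^ t * i < p ^ t * p ^ (s - t) := (Nat.mul_lt_mul_left hpt).mpr hi
      _ = p ^ s := by rw [← pow_add]; congr 1; omega
    rw [Nat.mod_eq_of_lt hlt, Nat.mul_div_cancel_left _ hpt]

lemma card_coord (p s t : ℕ) (hp : 0 < p) (hts : t ≤ s) (a : ZMod (p ^ s)) :
    Nat.card {x : ZMod (p ^ s) // t ≤ expOf p s (x - a)} = p ^ (s - t) := by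
  rw [← card_dvd_val p s t hp hts]
  apply Nat.card_congr
  have e1 : {x : ZMod (p ^ s) // t ≤ expOf p s (x - a)} ≃
      {y : ZMod (p ^ s) // t ≤ expOf p s y} :=
    Equiv.subtypeEquiv (Equiv.subRight a) (fun x => Iff.rfl)
  refine e1.trans (Equiv.subtypeEquivRight fun y => ?_)
  rw [le_expOf_iff, exists_mul_iff_dvd_val p s t hp hts]
  exact ⟨fun h => h.2, fun h => ⟨hts, h⟩⟩

lemma card_all_ge (p r n : ℕ) (hp : 0 < p) (hn : n ≤ r) (m : ℕ → ℕ)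
    (a : (s : Finset.Icc 1 r) → Fin (m s.1) → ZMod (p ^ s.1)) :
    Nat.card {at' : (s : Finset.Icc 1 r) → Fin (m s.1) → ZMod (p ^ s.1) //
      ∀ (s : Finset.Icc 1 r) (l : Fin (m s.1)),
        n ≤ (r - s.1) + expOf p s.1 (at' s l - a s l)} =
    ∏ s ∈ Finset.Icc 1 r, min (p ^ (r - n)) (p ^ s) ^ m s := by
  haveI : NeZero p := ⟨hp.ne'⟩
  have e1 : {at' : (s : Finset.Icc 1 r) → Fin (m s.1) → ZMod (p ^ s.1) //
      ∀ (s : Finset.Icc 1 r) (l : Fin (m s.1)),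
        n ≤ (r - s.1) + expOf p s.1 (at' s l - a s l)} ≃
      ((s : Finset.Icc 1 r) → {g : Fin (m s.1) → ZMod (p ^ s.1) //
        ∀ l : Fin (m s.1), n ≤ (r - s.1) + expOf p s.1 (g l - a s l)}) :=
    Equiv.subtypePiEquivPi
      (p := fun (s : Finset.Icc 1 r) (g : Fin (m s.1) → ZMod (p ^ s.1)) =>
        ∀ l : Fin (m s.1), n ≤ (r - s.1) + expOf p s.1 (g l - a s l))
  rw [Nat.card_congr e1, Nat.card_pi,
    ← Finset.prod_coe_sort (Finset.Icc 1 r) (fun s => min (p ^ (r - n)) (p ^ s) ^ m s)]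
  apply Finset.prod_congr rfl
  intro s _
  have hs : 1 ≤ s.1 ∧ s.1 ≤ r := by
    have := s.2; rwa [Finset.mem_Icc] at this
  have e2 : {g : Fin (m s.1) → ZMod (p ^ s.1) //
      ∀ l : Fin (m s.1), n ≤ (r - s.1) + expOf p s.1 (g l - a s l)} ≃
      ((l : Fin (m s.1)) → {x : ZMod (p ^ s.1) //
        n ≤ (r - s.1) + expOf p s.1 (x - a s l)}) :=
    Equiv.subtypePiEquivPi
      (p := fun (l : Fin (m s.1)) (x : ZMod (p ^ s.1)) =>
        n ≤ (r - s.1) + expOf p s.1 (x - a s l))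
  rw [Nat.card_congr e2, Nat.card_pi]
  have hcoord : ∀ l : Fin (m s.1),
      Nat.card {x : ZMod (p ^ s.1) // n ≤ (r - s.1) + expOf p s.1 (x - a s l)} =
      min (p ^ (r - n)) (p ^ s.1) := by
    intro l
    have ht : n - (r - s.1) ≤ s.1 := by omega
    have hiff : ∀ x : ZMod (p ^ s.1),
        (n ≤ (r - s.1) + expOf p s.1 (x - a s l)) ↔
        (n - (r - s.1) ≤ expOf p s.1 (x - a s l)) := by
      intro x; omega
    rw [Nat.card_congr (Equiv.subtypeEquivRight hiff), card_coord p s.1 _ hp ht]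
    have hmin : s.1 - (n - (r - s.1)) = min (r - n) s.1 := by omega
    rw [hmin]
    rcases le_total (r - n) s.1 with h | h
    · rw [min_eq_left h, min_eq_left (Nat.pow_le_pow_right hp h)]
    · rw [min_eq_right h, min_eq_right (Nat.pow_le_pow_right hp h)]
  calc (∏ l : Fin (m s.1), Nat.card {x : ZMod (p ^ s.1) //
          n ≤ (r - s.1) + expOf p s.1 (x - a s l)})
      = ∏ _l : Fin (m s.1), min (p ^ (r - n)) (p ^ s.1) := Finset.prod_congr rfl
        (fun l _ => hcoord l)
    _ = min (p ^ (r - n)) (p ^ s.1) ^ m s.1 := by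
        rw [Finset.prod_const, Finset.card_univ, Fintype.card_fin]

lemma ncard_setOf {α : Type*} (pred : α → Prop) :
    Nat.card {x // pred x} = {x | pred x}.ncard :=
  Nat.card_coe_set_eq _

theorem stmt_12 (p r k : ℕ) (hp : p.Prime) (hr : 0 < r) (hk : 0 < k)
    (w : ℕ → ℝ) (hw0 : ∀ s, 0 ≤ w s) (hsum : ∑ s ∈ Finset.Icc 1 r, w s = 1)
    (m : ℕ → ℕ) (hm : ∀ s, (m s : ℝ) = (k : ℝ) * w s)
    (θ : ℕ) (hθ : θ < r)
    (a : (s : Finset.Icc 1 r) → Fin (m s.1) → ZMod (p ^ s.1)) :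
    Nat.card {at' : (s : Finset.Icc 1 r) → Fin (m s.1) → ZMod (p ^ s.1) //
        sInf {v : ℕ | ∃ (s : Finset.Icc 1 r) (l : Fin (m s.1)),
          v = (r - s.1) + expOf p s.1 (at' s l - a s l)} = θ} =
      (∏ s ∈ Finset.Icc 1 r, min (p ^ (r - θ)) (p ^ s) ^ m s) -
        (∏ s ∈ Finset.Icc 1 r, min (p ^ (r - θ - 1)) (p ^ s) ^ m s) := by
  have hp0 : 0 < p := hp.pos
  haveI : NeZero p := ⟨hp0.ne'⟩
  -- some index exists
  have hex : ∃ s : Finset.Icc 1 r, 0 < m s.1 := by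
    by_contra h
    push_neg at h
    have hz : ∀ s ∈ Finset.Icc 1 r, (m s : ℝ) = 0 := by
      intro s hs
      have := h ⟨s, hs⟩
      simp only [Nat.le_zero] at this
      exact_mod_cast congrArg (Nat.cast (R := ℝ)) this
    have : (k : ℝ) = 0 := by
      have h1 : (k : ℝ) = ∑ s ∈ Finset.Icc 1 r, (m s : ℝ) := by
        rw [Finset.sum_congr rfl (fun s _ => hm s), ← Finset.mul_sum, hsum, mul_one]
      rw [h1, Finset.sum_congr rfl hz, Finset.sum_const, smul_zero]
    exact hk.ne' (by exact_mod_cast this)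
  obtain ⟨s₀, hs₀⟩ := hex
  set P : ((s : Finset.Icc 1 r) → Fin (m s.1) → ZMod (p ^ s.1)) → Prop :=
    fun at' => ∀ (s : Finset.Icc 1 r) (l : Fin (m s.1)),
      θ ≤ (r - s.1) + expOf p s.1 (at' s l - a s l) with hP
  set Q : ((s : Finset.Icc 1 r) → Fin (m s.1) → ZMod (p ^ s.1)) → Prop :=
    fun at' => ∀ (s : Finset.Icc 1 r) (l : Fin (m s.1)),
      θ + 1 ≤ (r - s.1) + expOf p s.1 (at' s l - a s l) with hQ
  have key : ∀ at' : (s : Finset.Icc 1 r) → Fin (m s.1) → ZMod (p ^ s.1),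
      (sInf {v : ℕ | ∃ (s : Finset.Icc 1 r) (l : Fin (m s.1)),
        v = (r - s.1) + expOf p s.1 (at' s l - a s l)} = θ) ↔ (P at' ∧ ¬ Q at') := by
    intro at'
    set S := {v : ℕ | ∃ (s : Finset.Icc 1 r) (l : Fin (m s.1)),
        v = (r - s.1) + expOf p s.1 (at' s l - a s l)} with hS
    have hSne : S.Nonempty :=
      ⟨(r - s₀.1) + expOf p s₀.1 (at' s₀ ⟨0, hs₀⟩ - a s₀ ⟨0, hs₀⟩), s₀, ⟨0, hs₀⟩, rfl⟩
    constructor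
    · intro h
      have hmem : θ ∈ S := h ▸ Nat.sInf_mem hSne
      constructor
      · intro s l
        have : sInf S ≤ (r - s.1) + expOf p s.1 (at' s l - a s l) :=
          Nat.sInf_le ⟨s, l, rfl⟩
        omega
      · intro hQ'
        obtain ⟨s, l, hv⟩ := hmem
        have := hQ' s l
        omega
    · rintro ⟨hP', hQ'⟩
      simp only [hQ, not_forall, not_le] at hQ'
      obtain ⟨s, l, hv⟩ := hQ'
      have h1 := hP' s l
      have hmem : θ ∈ S := ⟨s, l, by omega⟩
      refine le_antisymm (Nat.sInf_le hmem) (le_csInf hSne ?_)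
      rintro b ⟨s', l', rfl⟩
      exact hP' s' l'
  rw [Nat.card_congr (Equiv.subtypeEquivRight key)]
  have hsub : {x | Q x} ⊆ {x | P x} := fun x hx s l => le_trans (Nat.le_succ θ) (hx s l)
  have hdiff : {x | P x ∧ ¬ Q x} = {x | P x} \ {x | Q x} := by ext x; simp [Set.mem_diff]
  rw [ncard_setOf, hdiff, Set.ncard_diff hsub (Set.toFinite _), ← ncard_setOf, ← ncard_setOf]
  rw [hP, hQ]
  rw [card_all_ge p r θ hp0 (le_of_lt hθ) m a, card_all_ge p r (θ + 1) hp0 hθ m a]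

  rw [Nat.sub_sub]
end

section
/- Let r be a positive integer and let I_0 ≥ I_1 ≥ ⋯ ≥ I_{r−1} ≥ 0 be reals (playing the role of I(X;Y|[X]_θ), which is nonincreasing in θ). Then max_{1 ≤ r̃ ≤ r} min_{r−r̃ ≤ θ ≤ r−1} (r̃/(r−θ))·I_θ = min_{0 ≤ θ ≤ r−1} (r/(r−θ))·I_θ. -/
theorem stmt_16 (r : ℕ) (hr : 0 < r) (I : ℕ → ℝ)
    (hmono : ∀ θ θ' : ℕ, θ ≤ θ' → θ' ≤ r - 1 → I θ' ≤ I θ)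
    (hnn : ∀ θ ≤ r - 1, 0 ≤ I θ) :
    (⨆ rt : Finset.Icc 1 r, ⨅ θ : Finset.Icc (r - (rt : ℕ)) (r - 1),
        ((rt : ℕ) : ℝ) / ((r : ℝ) - ((θ : ℕ) : ℝ)) * I θ) =
      ⨅ θ : Finset.Icc 0 (r - 1), ((r : ℝ) / ((r : ℝ) - ((θ : ℕ) : ℝ))) * I θ := by
  have hpos : ∀ θ : ℕ, θ ≤ r - 1 → (0:ℝ) < (r:ℝ) - (θ:ℝ) := by
    intro θ hθ
    have h1 : θ < r := lt_of_le_of_lt hθ (Nat.sub_lt hr one_pos)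
    have h2 : (θ:ℝ) < r := by exact_mod_cast h1
    linarith
  haveI : Nonempty (Finset.Icc 0 (r-1)) := ⟨⟨0, Finset.mem_Icc.mpr ⟨le_rfl, Nat.zero_le _⟩⟩⟩
  haveI : Nonempty (Finset.Icc 1 r) := ⟨⟨r, Finset.mem_Icc.mpr ⟨hr, le_rfl⟩⟩⟩
  apply le_antisymm
  · apply ciSup_le
    intro rt
    obtain ⟨hrt1, hrtr⟩ := Finset.mem_Icc.mp rt.2
    haveI : Nonempty (Finset.Icc (r - (rt : ℕ)) (r - 1)) :=
      ⟨⟨r - 1, Finset.mem_Icc.mpr ⟨Nat.sub_le_sub_left hrt1 r, le_rfl⟩⟩⟩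
    apply le_ciInf
    intro θ₀
    obtain ⟨-, hθ₀⟩ := Finset.mem_Icc.mp θ₀.2
    have hpos0 := hpos θ₀ hθ₀
    have hI0 := hnn θ₀ hθ₀
    by_cases hc : r - (rt : ℕ) ≤ (θ₀ : ℕ)
    · have hmem : (θ₀ : ℕ) ∈ Finset.Icc (r - (rt : ℕ)) (r - 1) :=
        Finset.mem_Icc.mpr ⟨hc, hθ₀⟩
      refine le_trans (ciInf_le ((Set.finite_range _).bddBelow) ⟨(θ₀:ℕ), hmem⟩) ?_
      have hrtR : ((rt:ℕ):ℝ) ≤ (r:ℝ) := by exact_mod_cast hrtr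
      gcongr
    · push_neg at hc
      have hsub : r - (rt:ℕ) ≤ r - 1 := Nat.sub_le_sub_left hrt1 r
      have hmem : r - (rt:ℕ) ∈ Finset.Icc (r - (rt : ℕ)) (r - 1) :=
        Finset.mem_Icc.mpr ⟨le_rfl, hsub⟩
      refine le_trans (ciInf_le ((Set.finite_range _).bddBelow) ⟨r - (rt:ℕ), hmem⟩) ?_
      have hcast : ((r - (rt:ℕ) : ℕ) : ℝ) = (r:ℝ) - ((rt:ℕ):ℝ) := Nat.cast_sub hrtr
      have hrtpos : (0:ℝ) < ((rt:ℕ):ℝ) := by exact_mod_cast hrt1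
      have hfrac : ((rt:ℕ):ℝ) / ((r:ℝ) - ((r - (rt:ℕ) : ℕ) : ℝ)) = 1 := by
        rw [hcast, sub_sub_cancel, div_self hrtpos.ne']
      rw [hfrac, one_mul]
      have hImono : I (r - (rt:ℕ)) ≤ I θ₀ := hmono θ₀ _ (le_of_lt hc) hsub
      have hone : (1:ℝ) ≤ (r:ℝ) / ((r:ℝ) - ((θ₀:ℕ):ℝ)) := by
        rw [le_div_iff₀ hpos0]
        have : (0:ℝ) ≤ ((θ₀:ℕ):ℝ) := Nat.cast_nonneg _
        linarith
      calc I (r - (rt:ℕ)) ≤ I θ₀ := hImono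
        _ = 1 * I θ₀ := (one_mul _).symm
        _ ≤ (r:ℝ) / ((r:ℝ) - ((θ₀:ℕ):ℝ)) * I θ₀ := by gcongr
  · have hmem : r ∈ Finset.Icc 1 r := Finset.mem_Icc.mpr ⟨hr, le_rfl⟩
    haveI : Nonempty (Finset.Icc (r - ((⟨r, hmem⟩ : Finset.Icc 1 r) : ℕ)) (r - 1)) :=
      ⟨⟨r - 1, Finset.mem_Icc.mpr ⟨Nat.sub_le_sub_left hr r, le_rfl⟩⟩⟩
    refine le_trans ?_ (le_ciSup (f := fun rt : Finset.Icc 1 r => ⨅ θ : Finset.Icc (r - (rt : ℕ)) (r - 1),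
      ((rt : ℕ) : ℝ) / ((r : ℝ) - ((θ : ℕ) : ℝ)) * I θ)
      ((Set.finite_range _).bddAbove) ⟨r, hmem⟩)
    apply le_ciInf
    intro θ
    obtain ⟨hθl, hθu⟩ := Finset.mem_Icc.mp θ.2
    have hmem' : (θ:ℕ) ∈ Finset.Icc 0 (r - 1) := Finset.mem_Icc.mpr ⟨Nat.zero_le _, hθu⟩
    exact ciInf_le (f := fun θ : Finset.Icc 0 (r-1) =>
      ((r:ℝ) / ((r:ℝ) - ((θ:ℕ):ℝ))) * I θ) ((Set.finite_range _).bddBelow) ⟨(θ:ℕ), hmem'⟩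
end
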